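/- arXiv:1611.03705 — 2 statements merged into one kernel-verified Lean document; each statement's English description precedes it below -/
import Mathlib

section
/- Fix natural numbers k ≥ 1 and N ≥ 2, and let r = ⌊log₂ N⌋. Then the number of natural numbers n < N such that the Catalan number Cₙ is congruent to 0 modulo 2^k is at least N − Σ_{i=0}^{k−1} binomial(r+1, i+1). -/
open Finset

private lemma s2_double (n : ℕ) :
    (Nat.digits 2 (2 * n)).sum = (Nat.digits 2 n).sum := by
  rcases Nat.eq_zero_or_pos n with h | h
  · simp [h]
  · rw [Nat.digits_def' (by norm_num) (by omega)]
    simp [Nat.mul_div_cancel_left _ (by norm_num : 0 < 2), Nat.mul_mod_right]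

private lemma catalan_ne_zero (n : ℕ) : catalan n ≠ 0 := by
  have h := succ_mul_catalan_eq_centralBinom n
  have h2 := n.centralBinom_pos
  intro hc
  rw [hc, mul_zero] at h
  omega

private lemma val2_centralBinom (n : ℕ) :
    padicValNat 2 (Nat.centralBinom n) = (Nat.digits 2 n).sum := by
  have hk : n ≤ 2 * n := by omega
  have := @sub_one_mul_padicValNat_choose_eq_sub_sum_digits 2 n (2 * n)
    ⟨Nat.prime_two⟩ hk
  rw [Nat.centralBinom]
  have hd : (Nat.digits 2 (2 * n)).sum = (Nat.digits 2 n).sum := s2_double n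
  have h2 : 2 * n - n = n := by omega
  rw [h2, hd] at this
  omega

/-- key digit-sum identity: `s(m+1) + ν₂(m+1) = s(m) + 1`. -/
private lemma digitsum_succ : ∀ m : ℕ,
    (Nat.digits 2 (m + 1)).sum + padicValNat 2 (m + 1) = (Nat.digits 2 m).sum + 1 := by
  intro m
  induction m using Nat.strong_induction_on with
  | _ m ih =>
    rcases Nat.even_or_odd (m + 1) with he | ho
    · -- m + 1 = 2 * u, u ≥ 1
      obtain ⟨u, hu⟩ := he
      have hu1 : 1 ≤ u := by omega
      have hmu : m + 1 = 2 * u := by omega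
      have hv : padicValNat 2 (m + 1) = padicValNat 2 u + 1 := by
        rw [hmu, padicValNat.mul (by norm_num) (by omega), padicValNat.self (by norm_num)]
        omega
      have hs : (Nat.digits 2 (m + 1)).sum = (Nat.digits 2 u).sum := by
        rw [hmu]; exact s2_double u
      -- m = 2u - 1 is odd : s(m) = 1 + s(u - 1)
      have hm : m = 2 * (u - 1) + 1 := by omega
      have hsm : (Nat.digits 2 m).sum = 1 + (Nat.digits 2 (u - 1)).sum := by
        rw [hm, Nat.digits_def' (by norm_num) (by omega)]
        have : (2 * (u - 1) + 1) % 2 = 1 := by omega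
        have hdiv : (2 * (u - 1) + 1) / 2 = u - 1 := by omega
        simp [this, hdiv]
      have hIH := ih (u - 1) (by omega)
      have hu' : u - 1 + 1 = u := by omega
      rw [hu'] at hIH
      omega
    · -- m + 1 odd
      have hv : padicValNat 2 (m + 1) = 0 := by
        apply padicValNat.eq_zero_of_not_dvd
        rw [Nat.two_dvd_ne_zero]
        rcases ho with ⟨t, ht⟩; omega
      rcases Nat.eq_zero_or_pos m with hm0 | hm0
      · subst hm0; simp [hv]
      · -- m even and positive
        obtain ⟨t, ht⟩ : ∃ t, m = 2 * t := by rcases ho with ⟨t, ht⟩; exact ⟨t, by omega⟩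
        have hs1 : (Nat.digits 2 (m + 1)).sum = 1 + (Nat.digits 2 t).sum := by
          rw [Nat.digits_def' (by norm_num) (by omega)]
          have h1 : (m + 1) % 2 = 1 := by omega
          have h2 : (m + 1) / 2 = t := by omega
          simp [h1, h2]
        have hs2 : (Nat.digits 2 m).sum = (Nat.digits 2 t).sum := by
          rw [ht]; exact s2_double t
        omega

private lemma val2_catalan (n : ℕ) :
    padicValNat 2 (catalan n) + 1 = (Nat.digits 2 (n + 1)).sum := by
  have h := succ_mul_catalan_eq_centralBinom n
  have hmul : padicValNat 2 (n + 1) + padicValNat 2 (catalan n)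
      = padicValNat 2 (Nat.centralBinom n) := by
    rw [← @padicValNat.mul 2 _ _ ⟨Nat.prime_two⟩ (by omega) (catalan_ne_zero n), h]
  have h1 := val2_centralBinom n
  have h2 := digitsum_succ n
  omega

/-- `2^k ∣ catalan n ↔ k + 1 ≤ s₂(n+1)` -/
private lemma dvd_catalan_iff (k n : ℕ) :
    2 ^ k ∣ catalan n ↔ k + 1 ≤ (Nat.digits 2 (n + 1)).sum := by
  rw [@padicValNat_dvd_iff 2 k ⟨Nat.prime_two⟩ (catalan n)]
  have := val2_catalan n
  constructor
  · rintro (h | h)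
    · exact absurd h (catalan_ne_zero n)
    · omega
  · intro h; right; omega

private lemma bit_count_eq_digit_sum :
    ∀ m b : ℕ, m < 2 ^ b →
      ((range b).filter (fun i => m.testBit i)).card = (Nat.digits 2 m).sum := by
  intro m b
  induction b generalizing m with
  | zero => intro h; interval_cases m; simp
  | succ b ih =>
    intro h
    rcases Nat.eq_zero_or_pos m with h0 | h0
    · subst h0; simp
    rw [Finset.card_filter, Finset.sum_range_succ']
    have hb : ∀ i, m.testBit (i + 1) = (m / 2).testBit i := fun i => Nat.testBit_succ m i
    have hdiv : m / 2 < 2 ^ b := by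
      have hp : (2:ℕ) ^ (b + 1) = 2 ^ b * 2 := pow_succ 2 b
      omega
    have := ih (m / 2) hdiv
    rw [Finset.card_filter] at this
    simp only [hb]
    rw [this, Nat.digits_def' (by norm_num : (1:ℕ) < 2) h0]
    have hm2 : m % 2 = 0 ∨ m % 2 = 1 := by omega
    rcases hm2 with h2 | h2 <;> simp [Nat.testBit_zero, h2, add_comm]

private lemma digit_sum_pos (m : ℕ) (hm : 0 < m) : 0 < (Nat.digits 2 m).sum := by
  rw [Nat.digits_def' (by norm_num : (1:ℕ) < 2) hm]
  rcases Nat.eq_zero_or_pos (m % 2) with h | h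
  · simp only [List.sum_cons, h]
    have : 0 < m / 2 := by omega
    have := digit_sum_pos (m / 2) this
    omega
  · simp only [List.sum_cons]; omega
  termination_by m
  decreasing_by exact Nat.div_lt_self hm (by norm_num)

/-- counting numbers `1 ≤ m < 2^b` with digit sum in `[1, k]` -/
private lemma count_small_digit_sum (b k N : ℕ) (hN : N < 2 ^ b) :
    ((range N).filter (fun n => (Nat.digits 2 (n + 1)).sum ≤ k)).card
      ≤ ∑ j ∈ Finset.Icc 1 k, b.choose j := by
  classical
  have key : ((range N).filter (fun n => (Nat.digits 2 (n + 1)).sum ≤ k)).card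
      ≤ ((Finset.Icc 1 k).biUnion (fun j => Finset.powersetCard j (range b))).card := by
    apply Finset.card_le_card_of_injOn
      (fun n => (range b).filter (fun i => (n + 1).testBit i))
    · intro n hn
      simp only [Finset.mem_coe, Finset.mem_filter, Finset.mem_range] at hn
      obtain ⟨hnN, hsum⟩ := hn
      have hlt : n + 1 < 2 ^ b := by omega
      have hcard := bit_count_eq_digit_sum (n + 1) b hlt
      simp only [Finset.mem_coe, Finset.mem_biUnion, Finset.mem_Icc, Finset.mem_powersetCard]
      refine ⟨(Nat.digits 2 (n + 1)).sum, ⟨digit_sum_pos _ (by omega), hsum⟩,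
        Finset.filter_subset _ _, hcard⟩
    · intro n hn n' hn' heq
      simp only [Finset.coe_filter, Set.mem_setOf_eq, Finset.mem_range] at hn hn'
      have hlt : n + 1 < 2 ^ b := by omega
      have hlt' : n' + 1 < 2 ^ b := by omega
      have : n + 1 = n' + 1 := by
        apply Nat.eq_of_testBit_eq
        intro i
        by_cases hib : i < b
        · have := Finset.ext_iff.mp heq i
          simp only [Finset.mem_filter, Finset.mem_range, hib, true_and] at this
          by_cases h1 : (n + 1).testBit i
          · rw [h1, (this.mp h1)]
          · by_cases h2 : (n' + 1).testBit i
            · exact absurd (this.mpr h2) h1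
            · rw [Bool.eq_false_iff.mpr h1, Bool.eq_false_iff.mpr h2]
        · rw [Nat.testBit_eq_false_of_lt (lt_of_lt_of_le hlt (Nat.pow_le_pow_right
              (by norm_num) (by omega))),
            Nat.testBit_eq_false_of_lt (lt_of_lt_of_le hlt' (Nat.pow_le_pow_right
              (by norm_num) (by omega)))]
      omega
  refine key.trans ?_
  refine (Finset.card_biUnion_le).trans ?_
  apply Finset.sum_le_sum
  intro j _
  rw [Finset.card_powersetCard, Finset.card_range]

/-- For `k ≥ 1`, `N ≥ 2` and `r = ⌊log₂ N⌋`, the count of `n < N` with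
`Cₙ ≡ 0 (mod 2^k)` is at least `N − Σ_{i=0}^{k−1} C(r+1, i+1)`. -/
theorem card_catalan_modEq_zero_lower_bound (k N : ℕ) (hk : 1 ≤ k) (hN : 2 ≤ N)
    (r : ℕ) (hr : r = Nat.log 2 N) :
    (N : ℤ) - ∑ i ∈ Finset.range k, ((r + 1).choose (i + 1) : ℤ)
      ≤ ({n : ℕ | n < N ∧ catalan n ≡ 0 [MOD 2 ^ k]}.ncard : ℤ) := by
  classical
  set G : Finset ℕ := (range N).filter (fun n => catalan n ≡ 0 [MOD 2 ^ k]) with hG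
  have hset : {n : ℕ | n < N ∧ catalan n ≡ 0 [MOD 2 ^ k]} = ↑G := by
    ext n; simp [hG, Finset.mem_filter, Finset.mem_range]
  rw [hset, Set.ncard_coe_finset]
  -- the bad set
  set B : Finset ℕ := (range N).filter (fun n => ¬ catalan n ≡ 0 [MOD 2 ^ k]) with hB
  have hsplit : G.card + B.card = N := by
    rw [hG, hB, Finset.card_filter_add_card_filter_not, Finset.card_range]
  -- bad set equals small-digit-sum set
  have hBeq : B = (range N).filter (fun n => (Nat.digits 2 (n + 1)).sum ≤ k) := by
    apply Finset.filter_congr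
    intro n _
    simp only [Nat.modEq_zero_iff_dvd, dvd_catalan_iff, eq_iff_iff]
    omega
  have hNlt : N < 2 ^ (r + 1) := by
    rw [hr]; exact Nat.lt_pow_succ_log_self (by norm_num) N
  have hBle : B.card ≤ ∑ j ∈ Finset.Icc 1 k, (r + 1).choose j := by
    rw [hBeq]; exact count_small_digit_sum (r + 1) k N hNlt
  have hsum : ∑ j ∈ Finset.Icc 1 k, (r + 1).choose j
      = ∑ i ∈ Finset.range k, (r + 1).choose (i + 1) := by
    rw [← Finset.Ico_add_one_right_eq_Icc, Finset.sum_Ico_eq_sum_range]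
    simp [add_comm]
  rw [hsum] at hBle
  have hcast : ∑ i ∈ Finset.range k, ((r + 1).choose (i + 1) : ℤ)
      = ((∑ i ∈ Finset.range k, (r + 1).choose (i + 1) : ℕ) : ℤ) := by
    push_cast; ring
  rw [hcast]
  have := hBle
  omega
end

section
/- For natural numbers N and k with k ≥ 1 and N ≥ 1, and r = ⌊log₂ N⌋, the number of natural numbers n < N with d(α(n)) = k is at most binomial(r+1, k+1). -/
/-- Binary digit sum: the sum of the digits of `n` in base 2. -/
def binaryDigitSum (n : ℕ) : ℕ := (Nat.digits 2 n).sum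

/-- `α(n) = (CF₂(n+1) − 1)/2` where `CF₂(m) = m / 2^{ν₂(m)}` is the odd cofactor. -/
def alphaFn (n : ℕ) : ℕ := ((n + 1) / 2 ^ padicValNat 2 (n + 1) - 1) / 2

lemma dsum_two_mul (x : ℕ) (hx : 0 < x) :
    (Nat.digits 2 (2 * x)).sum = (Nat.digits 2 x).sum := by
  rw [Nat.digits_def' (by norm_num : 1 < 2) (by omega)]
  simp [Nat.mul_div_cancel_left x (by norm_num : 0 < 2), Nat.mul_mod_right]

lemma dsum_pow_mul (v o : ℕ) (ho : 0 < o) :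
    (Nat.digits 2 (2 ^ v * o)).sum = (Nat.digits 2 o).sum := by
  induction v with
  | zero => simp
  | succ v ih =>
    have : 2 ^ (v + 1) * o = 2 * (2 ^ v * o) := by ring
    rw [this, dsum_two_mul _ (by positivity), ih]

lemma dsum_odd (a : ℕ) :
    (Nat.digits 2 (2 * a + 1)).sum = (Nat.digits 2 a).sum + 1 := by
  rw [Nat.digits_def' (by norm_num : 1 < 2) (by omega)]
  have h1 : (2 * a + 1) % 2 = 1 := by omega
  have h2 : (2 * a + 1) / 2 = a := by omega
  simp [h1, h2]; omega

lemma dsum_succ_eq (n : ℕ) :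
    (Nat.digits 2 (n + 1)).sum = (Nat.digits 2 (alphaFn n)).sum + 1 := by
  set m := n + 1 with hm
  set v := padicValNat 2 m with hv
  set o := m / 2 ^ v with hoo
  have h1 : 2 ^ v * o = m := Nat.ordProj_mul_ordCompl_eq_self m 2
  have ho : ¬ 2 ∣ o := Nat.not_dvd_ordCompl Nat.prime_two (by omega)
  have hopos : 0 < o := Nat.ordCompl_pos 2 (by omega)
  have homod : o % 2 = 1 := Nat.two_dvd_ne_zero.mp ho
  have hoe : o = 2 * ((o - 1) / 2) + 1 := by omega
  have halpha : alphaFn n = (o - 1) / 2 := rfl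
  rw [← h1, dsum_pow_mul v o hopos, halpha]
  conv_lhs => rw [hoe]
  exact dsum_odd _

lemma dsum_eq_card_testBit (b : ℕ) : ∀ m : ℕ, m < 2 ^ b →
    (Nat.digits 2 m).sum = ∑ i ∈ Finset.range b, (if m.testBit i then 1 else 0) := by
  induction b with
  | zero => intro m hm; interval_cases m; simp
  | succ b ih =>
    intro m hm
    rcases Nat.eq_zero_or_pos m with h0 | h0
    · subst h0; simp
    rw [Nat.digits_def' (by norm_num : 1 < 2) h0, Finset.sum_range_succ']
    have hbit : ∀ i, m.testBit (i + 1) = (m / 2).testBit i := fun i => Nat.testBit_succ m i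
    have hdiv : m / 2 < 2 ^ b := by
      have : m < 2 * 2 ^ b := by rw [← pow_succ']; exact hm
      omega
    simp only [hbit]
    rw [← ih (m / 2) hdiv]
    have h0b : (if m.testBit 0 then 1 else 0) = m % 2 := by
      rw [Nat.testBit_zero]
      rcases Nat.mod_two_eq_zero_or_one m with h | h <;> simp [h]
    simp only [List.sum_cons, h0b]; omega

/-- For `k ≥ 1`, `N ≥ 1` and `r = ⌊log₂ N⌋`,
`#{n < N : d(α(n)) = k} ≤ C(r+1, k+1)`. -/
theorem card_dAlpha_le (N k : ℕ) (hk : 1 ≤ k) (hN : 1 ≤ N)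
    (r : ℕ) (hr : r = Nat.log 2 N) :
    {n : ℕ | n < N ∧ binaryDigitSum (alphaFn n) = k}.ncard ≤ (r + 1).choose (k + 1) := by
  set S := {n : ℕ | n < N ∧ binaryDigitSum (alphaFn n) = k} with hS
  have hfin : S.Finite := (Set.finite_Iio N).subset (fun n hn => hn.1)
  rw [Set.ncard_eq_toFinset_card S hfin]
  have hNlt : N < 2 ^ (r + 1) := by
    rw [hr]; exact Nat.lt_pow_succ_log_self (by norm_num) N
  have key : ∀ n ∈ hfin.toFinset, n + 1 < 2 ^ (r + 1) ∧
      (Nat.digits 2 (n + 1)).sum = k + 1 := by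
    intro n hn
    rw [Set.Finite.mem_toFinset] at hn
    obtain ⟨h1n, h2n⟩ := hn
    refine ⟨by omega, ?_⟩
    rw [dsum_succ_eq n]
    have := h2n
    unfold binaryDigitSum at this
    omega
  calc hfin.toFinset.card
      ≤ (Finset.powersetCard (k + 1) (Finset.range (r + 1))).card := by
        apply Finset.card_le_card_of_injOn
          (fun n => (Finset.range (r + 1)).filter (fun i => (n + 1).testBit i))
        · intro n hn
          obtain ⟨hlt, hd⟩ := key n hn
          rw [Finset.mem_coe, Finset.mem_powersetCard]
          refine ⟨Finset.filter_subset _ _, ?_⟩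
          rw [Finset.card_filter, ← dsum_eq_card_testBit (r + 1) (n + 1) hlt, hd]
        · intro a ha b hb hab
          obtain ⟨hla, _⟩ := key a ha
          obtain ⟨hlb, _⟩ := key b hb
          have : a + 1 = b + 1 := by
            apply Nat.eq_of_testBit_eq
            intro i
            by_cases hi : i < r + 1
            · have := Finset.ext_iff.mp hab i
              simp only [Finset.mem_filter, Finset.mem_range] at this
              by_cases h1 : (a+1).testBit i
              · have := (this.mp ⟨hi, h1⟩).2; rw [h1, this]
              · by_cases h2 : (b+1).testBit i
                · exact absurd (this.mpr ⟨hi, h2⟩).2 h1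
                · simp only [Bool.not_eq_true] at h1 h2; rw [h1, h2]
            · have hpow : 2 ^ (r + 1) ≤ 2 ^ i := Nat.pow_le_pow_right (by norm_num) (by omega)
              rw [Nat.testBit_lt_two_pow (by omega), Nat.testBit_lt_two_pow (by omega)]
          omega
      _ = (r + 1).choose (k + 1) := by
        rw [Finset.card_powersetCard, Finset.card_range]
end
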